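/- Let n ∈ ℕ and let A, B, C : ℝ → Matrix ℝ n n, S : ℝ → Matrix ℝ n n, c : ℝ → ℝⁿ, ξ : ℝ → ℝⁿ, λ : ℝ → ℝⁿ all be continuously differentiable on an interval [0, T], with A, B, S continuous. Suppose that on [0, T]: (i) ξ'(τ) = A(τ)ξ(τ) − B(τ)λ(τ); (ii) λ'(τ) = −C(τ)ξ(τ) − A(τ)ᵀλ(τ); (iii) S satisfies the matrix Riccati differential equation S'(τ) = −A(τ)ᵀS(τ) − S(τ)A(τ) + S(τ)B(τ)S(τ) − C(τ); (iv) c'(τ) = −(A(τ)ᵀ − S(τ)B(τ))c(τ); and (v) the terminal condition λ(T) = S(T)ξ(T) + c(T) holds. Then λ(τ) = S(τ)ξ(τ) + c(τ) for all τ ∈ [0, T]. -/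

import Mathlib

open Matrix Set

attribute [local instance] Matrix.normedAddCommGroup Matrix.normedSpace

/-- Product rule for matrix–vector multiplication. -/
lemma hasDerivWithinAt_mulVec' {n : ℕ} {S : ℝ → Matrix (Fin n) (Fin n) ℝ}
    {v : ℝ → Fin n → ℝ} {S' : Matrix (Fin n) (Fin n) ℝ} {v' : Fin n → ℝ}
    {s : Set ℝ} {τ : ℝ}
    (hS : HasDerivWithinAt S S' s τ) (hv : HasDerivWithinAt v v' s τ) :
    HasDerivWithinAt (fun t => S t *ᵥ v t) (S' *ᵥ v τ + S τ *ᵥ v') s τ := by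
  rw [hasDerivWithinAt_pi]
  intro i
  have hSij : ∀ j, HasDerivWithinAt (fun t => S t i j) (S' i j) s τ := by
    intro j
    exact hasDerivWithinAt_pi.1 (hasDerivWithinAt_pi.1 hS i) j
  have hvj : ∀ j, HasDerivWithinAt (fun t => v t j) (v' j) s τ := fun j =>
    hasDerivWithinAt_pi.1 hv j
  have : HasDerivWithinAt (fun t => ∑ j, S t i j * v t j)
      (∑ j, (S' i j * v τ j + S τ i j * v' j)) s τ :=
    HasDerivWithinAt.fun_sum fun j _ => (hSij j).mul (hvj j)
  refine this.congr_deriv ?_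
  simp [Matrix.mulVec, dotProduct, Finset.sum_add_distrib]

/-- Sup-norm bound for matrix–vector multiplication (with the entrywise sup norm). -/
lemma norm_mulVec_le' {n : ℕ} (M : Matrix (Fin n) (Fin n) ℝ) (x : Fin n → ℝ) :
    ‖M *ᵥ x‖ ≤ (n : ℝ) * ‖M‖ * ‖x‖ := by
  have hnn : (0 : ℝ) ≤ (n : ℝ) * ‖M‖ * ‖x‖ := by positivity
  refine (pi_norm_le_iff_of_nonneg hnn).2 fun i => ?_
  calc ‖(M *ᵥ x) i‖ = ‖∑ j, M i j * x j‖ := by simp [Matrix.mulVec, dotProduct]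
    _ ≤ ∑ j, ‖M i j * x j‖ := norm_sum_le _ _
    _ ≤ ∑ _j : Fin n, ‖M‖ * ‖x‖ := by
        refine Finset.sum_le_sum fun j _ => ?_
        rw [norm_mul]
        exact mul_le_mul (Matrix.norm_entry_le_entrywise_sup_norm M)
          (norm_le_pi_norm x j) (norm_nonneg _) (norm_nonneg _)
    _ = (n : ℝ) * ‖M‖ * ‖x‖ := by
        simp [Finset.sum_const, mul_assoc]

/-- Backward-sweep relation: if `ξ, λ` solve the linear Hamiltonian system
`ξ' = Aξ − Bλ`, `λ' = −Cξ − Aᵀλ` on `[0, T]`, `S` solves the matrix Riccati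
equation `S' = −AᵀS − SA + SBS − C`, `c` solves `c' = −(Aᵀ − SB)c`, and the
terminal condition `λ(T) = S(T)ξ(T) + c(T)` holds, then
`λ(τ) = S(τ)ξ(τ) + c(τ)` on all of `[0, T]`. -/
theorem backward_sweep_relation {n : ℕ} (T : ℝ) (hT : 0 ≤ T)
    (A B C : ℝ → Matrix (Fin n) (Fin n) ℝ)
    (S : ℝ → Matrix (Fin n) (Fin n) ℝ)
    (c ξ lam : ℝ → (Fin n → ℝ))
    (hAcont : ContinuousOn A (Icc 0 T))
    (hBcont : ContinuousOn B (Icc 0 T))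
    (hCcont : ContinuousOn C (Icc 0 T))
    (hScont : ContinuousOn S (Icc 0 T))
    (hξ : ∀ τ ∈ Icc 0 T,
      HasDerivWithinAt ξ (A τ *ᵥ ξ τ - B τ *ᵥ lam τ) (Icc 0 T) τ)
    (hlam : ∀ τ ∈ Icc 0 T,
      HasDerivWithinAt lam (-(C τ *ᵥ ξ τ) - (A τ)ᵀ *ᵥ lam τ) (Icc 0 T) τ)
    (hS : ∀ τ ∈ Icc 0 T,
      HasDerivWithinAt S (-(A τ)ᵀ * S τ - S τ * A τ + S τ * B τ * S τ - C τ) (Icc 0 T) τ)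
    (hc : ∀ τ ∈ Icc 0 T,
      HasDerivWithinAt c (-(((A τ)ᵀ - S τ * B τ) *ᵥ c τ)) (Icc 0 T) τ)
    (hterm : lam T = S T *ᵥ ξ T + c T) :
    ∀ τ ∈ Icc 0 T, lam τ = S τ *ᵥ ξ τ + c τ := by
  set M : ℝ → Matrix (Fin n) (Fin n) ℝ := fun t => (A t)ᵀ - S t * B t with hM
  set e : ℝ → Fin n → ℝ := fun t => lam t - S t *ᵥ ξ t - c t with he
  -- derivative of the error
  have he' : ∀ τ ∈ Icc 0 T,
      HasDerivWithinAt e (-(M τ *ᵥ e τ)) (Icc 0 T) τ := by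
    intro τ hτ
    have h := ((hlam τ hτ).sub
      (hasDerivWithinAt_mulVec' (hS τ hτ) (hξ τ hτ))).sub (hc τ hτ)
    refine h.congr_deriv ?_
    simp only [hM, he]
    simp only [Matrix.sub_mulVec, Matrix.add_mulVec, Matrix.neg_mulVec,
      Matrix.mulVec_sub, Matrix.mulVec_add, Matrix.mulVec_neg,
      ← Matrix.mulVec_mulVec]
    abel
  -- e is continuous on [0, T]
  have heCont : ContinuousOn e (Icc 0 T) := fun τ hτ =>
    (he' τ hτ).continuousWithinAt
  -- terminal condition: e T = 0
  have heT : e T = 0 := by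
    simp [he, hterm]
  -- bound on M
  have hMcont : ContinuousOn M (Icc 0 T) := by
    refine ContinuousOn.sub ?_ ?_
    · exact (Continuous.matrix_transpose continuous_id).comp_continuousOn hAcont
    · exact (Continuous.matrix_mul continuous_fst continuous_snd).comp_continuousOn
        (hScont.prodMk hBcont)
  obtain ⟨R, hR⟩ := isCompact_Icc.exists_bound_of_continuousOn hMcont
  set K : ℝ := (n : ℝ) * max R 0 with hK
  -- time reversal
  set g : ℝ → Fin n → ℝ := fun t => e (T - t) with hg
  have hgmem : ∀ t ∈ Icc (0:ℝ) T, T - t ∈ Icc (0:ℝ) T := by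
    intro t ht
    exact ⟨by linarith [ht.2], by linarith [ht.1]⟩
  have hgCont : ContinuousOn g (Icc 0 T) := by
    refine heCont.comp (by fun_prop) hgmem
  have hg' : ∀ t ∈ Ico (0:ℝ) T,
      HasDerivWithinAt g (M (T - t) *ᵥ e (T - t)) (Ici t) t := by
    intro t ht
    have htm : T - t ∈ Icc (0:ℝ) T := hgmem t ⟨ht.1, ht.2.le⟩
    have hinner : HasDerivWithinAt (fun s : ℝ => T - s) (-1) (Icc 0 T) t :=
      ((hasDerivAt_id t).const_sub T).hasDerivWithinAt
    have hcomp : HasDerivWithinAt g ((-1 : ℝ) • (-(M (T - t) *ᵥ e (T - t))))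
        (Icc 0 T) t :=
      (he' (T - t) htm).scomp t hinner hgmem
    have hcomp' : HasDerivWithinAt g (M (T - t) *ᵥ e (T - t)) (Icc 0 T) t := by
      convert hcomp using 1; simp
    have hsub : HasDerivWithinAt g (M (T - t) *ᵥ e (T - t)) (Icc t T) t :=
      hcomp'.mono (Icc_subset_Icc ht.1 le_rfl)
    exact hsub.mono_of_mem_nhdsWithin (Icc_mem_nhdsGE_of_mem ⟨le_rfl, ht.2⟩)
  -- Grönwall
  have hbound : ∀ t ∈ Ico (0:ℝ) T,
      ‖M (T - t) *ᵥ e (T - t)‖ ≤ K * ‖g t‖ + 0 := by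
    intro t ht
    have htm : T - t ∈ Icc (0:ℝ) T := hgmem t ⟨ht.1, ht.2.le⟩
    have h1 := norm_mulVec_le' (M (T - t)) (e (T - t))
    have h2 : ‖M (T - t)‖ ≤ max R 0 := le_max_of_le_left (hR _ htm)
    have h3 : (n : ℝ) * ‖M (T - t)‖ * ‖e (T - t)‖ ≤ K * ‖e (T - t)‖ := by
      apply mul_le_mul_of_nonneg_right _ (norm_nonneg _)
      exact mul_le_mul_of_nonneg_left h2 (Nat.cast_nonneg n)
    simpa [hg] using h1.trans h3
  have key := norm_le_gronwallBound_of_norm_deriv_right_le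
    (f := g) (f' := fun t => M (T - t) *ᵥ e (T - t)) (δ := 0) (K := K) (ε := 0)
    hgCont hg' (by simp [hg, heT]) hbound
  -- conclude
  intro τ hτ
  have hτ' : T - τ ∈ Icc (0:ℝ) T := hgmem τ hτ
  have := key (T - τ) hτ'
  rw [gronwallBound_ε0_δ0] at this
  have heq : g (T - τ) = e τ := by simp [hg]
  rw [heq] at this
  have h0 : e τ = 0 := norm_le_zero_iff.1 this
  have h1 : lam τ - (S τ *ᵥ ξ τ + c τ) = 0 := by
    simpa [he, sub_sub] using h0
  exact sub_eq_zero.1 h1
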